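/- Let G = (V,w) and G' = (V,w') be weighted graphs on the same vertex set V with |V| = n, and suppose G' is an (α,β)-approximation to cut queries in G with α ≥ 0 and β ≥ 0. Then for every binary tree T with leaf set V: (1−α)·ω_G(T) − 2βn² ≤ ω_{G'}(T) ≤ (1+α)·ω_G(T) + 2βn². -/

import Mathlib

open Finset

inductive BTree (V : Type) : Type
  | leaf : V → BTree V
  | node : BTree V → BTree V → BTree V
  deriving DecidableEq

namespace BTree

variable {V : Type} [DecidableEq V]

def leavesList : BTree V → List V
  | leaf x => [x]
  | node L R => L.leavesList ++ R.leavesList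

def leaves (T : BTree V) : Finset V :=
  T.leavesList.toFinset

def cluster : BTree V → V → V → Finset V
  | leaf x, _, _ => {x}
  | node L R, u, v =>
    if u ∈ L.leaves ∧ v ∈ L.leaves then L.cluster u v
    else if u ∈ R.leaves ∧ v ∈ R.leaves then R.cluster u v
    else (node L R).leaves

end BTree

section
variable {V : Type} [Fintype V] [DecidableEq V]

def IsHC (T : BTree V) : Prop :=
  T.leavesList.Nodup ∧ T.leaves = Finset.univ

def IsWeight (w : V → V → ℝ) : Prop :=
  (∀ u v, 0 ≤ w u v) ∧ (∀ u v, w u v = w v u) ∧ ∀ u, w u u = 0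

noncomputable def cost (w : V → V → ℝ) (T : BTree V) : ℝ :=
  (1 / 2) * ∑ u : V, ∑ v : V, w u v * ((T.cluster u v).card : ℝ)

noncomputable def optCost (w : V → V → ℝ) : ℝ :=
  sInf {c : ℝ | ∃ T : BTree V, IsHC T ∧ cost w T = c}

noncomputable def graphDist (w w' : V → V → ℝ) : ℝ :=
  (1 / 2) * ∑ u : V, ∑ v : V, |w u v - w' u v|

noncomputable def cutW (w : V → V → ℝ) (A B : Finset V) : ℝ :=
  ∑ a ∈ A, ∑ b ∈ B, w a b

def IsEdgeDP (A : (V → V → ℝ) → PMF (BTree V)) (ε : ℝ) : Prop :=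
  ∀ w w' : V → V → ℝ, IsWeight w → IsWeight w' → graphDist w w' ≤ 1 →
    ∀ S : Set (BTree V),
      (A w').toOuterMeasure S ≤ ENNReal.ofReal (Real.exp ε) * (A w).toOuterMeasure S

end

/-- `G' = (V,w')` is an `(α,β)`-approximation to cut queries in `G = (V,w)`. -/
def CutApprox {V : Type} [Fintype V] [DecidableEq V] (w w' : V → V → ℝ) (α β : ℝ) : Prop :=
  ∀ S : Finset V,
    (1 - α) * cutW w S Sᶜ
        - β * ((min S.card (Fintype.card V - S.card) : ℕ) : ℝ) ≤ cutW w' S Sᶜ ∧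
    cutW w' S Sᶜ ≤ (1 + α) * cutW w S Sᶜ
        + β * ((min S.card (Fintype.card V - S.card) : ℕ) : ℝ)

section CutApproxProof

variable {V : Type} [Fintype V] [DecidableEq V]

lemma leaves_node' (L R : BTree V) : (BTree.node L R).leaves = L.leaves ∪ R.leaves := by
  simp [BTree.leaves, BTree.leavesList]

/-- Recursive "cut decomposition" functional: `F w T = 2 * cost w T` when `T` is a HC. -/
noncomputable def Fcut (w : V → V → ℝ) : BTree V → ℝ
  | .leaf x => cutW w {x} {x}ᶜ
  | .node L R => Fcut w L + Fcut w R + (R.leaves.card : ℝ) * cutW w L.leaves L.leavesᶜ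
      + (L.leaves.card : ℝ) * cutW w R.leaves R.leavesᶜ

/-- The corresponding bound on the additive error terms. -/
def Kcut : BTree V → ℕ
  | .leaf _ => 1
  | .node L R => Kcut L + Kcut R + 2 * L.leaves.card * R.leaves.card

lemma cutW_comm (w : V → V → ℝ) (hsymm : ∀ u v, w u v = w v u) (A B : Finset V) :
    cutW w A B = cutW w B A := by
  rw [cutW, cutW, Finset.sum_comm]
  exact Finset.sum_congr rfl fun b _ => Finset.sum_congr rfl fun a _ => hsymm a b

lemma cutW_union_left (w : V → V → ℝ) {A B : Finset V} (h : Disjoint A B) (C : Finset V) :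
    cutW w (A ∪ B) C = cutW w A C + cutW w B C :=
  Finset.sum_union h

lemma cutW_union_right (w : V → V → ℝ) {B C : Finset V} (h : Disjoint B C) (A : Finset V) :
    cutW w A (B ∪ C) = cutW w A B + cutW w A C := by
  simp [cutW, Finset.sum_union h, Finset.sum_add_distrib]

lemma compl_eq_union {A B : Finset V} (h : Disjoint A B) : Aᶜ = B ∪ (A ∪ B)ᶜ := by
  ext x
  have hx : x ∈ A → x ∉ B := fun h' => Finset.disjoint_left.mp h h'
  simp only [Finset.mem_compl, Finset.mem_union]
  tauto

lemma cut_union (w : V → V → ℝ) (hsymm : ∀ u v, w u v = w v u) {A B : Finset V}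
    (h : Disjoint A B) :
    cutW w (A ∪ B) (A ∪ B)ᶜ = cutW w A Aᶜ + cutW w B Bᶜ - 2 * cutW w A B := by
  have hA : Aᶜ = B ∪ (A ∪ B)ᶜ := compl_eq_union h
  have hB : Bᶜ = A ∪ (A ∪ B)ᶜ := by
    rw [Finset.union_comm A B]; exact compl_eq_union h.symm
  have d1 : Disjoint B (A ∪ B)ᶜ :=
    disjoint_compl_right.mono_left (Finset.le_iff_subset.mpr Finset.subset_union_right)
  have d2 : Disjoint A (A ∪ B)ᶜ :=
    disjoint_compl_right.mono_left (Finset.le_iff_subset.mpr Finset.subset_union_left)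
  rw [cutW_union_left w h, hA, hB, cutW_union_right w d1, cutW_union_right w d2,
    cutW_comm w hsymm B A]
  ring

/-- unnormalized local cost of a subtree -/
noncomputable def sc (w : V → V → ℝ) (T : BTree V) : ℝ :=
  ∑ u ∈ T.leaves, ∑ v ∈ T.leaves, w u v * ((T.cluster u v).card : ℝ)

lemma key_identity (w : V → V → ℝ) (hw : IsWeight w) :
    ∀ T : BTree V, T.leavesList.Nodup →
      sc w T + (T.leaves.card : ℝ) * cutW w T.leaves T.leavesᶜ = Fcut w T := by
  intro T
  induction T with
  | leaf x =>
    intro _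
    rw [Fcut]
    simp [sc, BTree.leaves, BTree.leavesList, BTree.cluster, hw.2.2 x]
  | node L R ihL ihR =>
    intro hnd
    simp only [BTree.leavesList, List.nodup_append] at hnd
    obtain ⟨h1, h2, hdl⟩ := hnd
    have hD : Disjoint L.leaves R.leaves := by
      rw [BTree.leaves, BTree.leaves, List.disjoint_toFinset_iff_disjoint]
      intro a ha hb; exact hdl a ha a hb rfl
    have ih1 := ihL h1
    have ih2 := ihR h2
    set A := L.leaves with hAdef
    set B := R.leaves with hBdef
    have hcard : (((BTree.node L R).leaves).card : ℝ) = (A.card : ℝ) + (B.card : ℝ) := by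
      rw [leaves_node', Finset.card_union_of_disjoint hD]; push_cast; ring
    have hcAA : ∀ u ∈ A, ∀ v ∈ A,
        w u v * (((BTree.node L R).cluster u v).card : ℝ)
          = w u v * ((L.cluster u v).card : ℝ) := by
      intro u hu v hv
      rw [BTree.cluster, if_pos ⟨hu, hv⟩]
    have hcBB : ∀ u ∈ B, ∀ v ∈ B,
        w u v * (((BTree.node L R).cluster u v).card : ℝ)
          = w u v * ((R.cluster u v).card : ℝ) := by
      intro u hu v hv
      have hu' : u ∉ A := Finset.disjoint_right.mp hD hu
      rw [BTree.cluster, if_neg (by tauto), if_pos ⟨hu, hv⟩]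
    have hcAB : ∀ u ∈ A, ∀ v ∈ B,
        w u v * (((BTree.node L R).cluster u v).card : ℝ)
          = w u v * ((A.card : ℝ) + (B.card : ℝ)) := by
      intro u hu v hv
      have hv' : v ∉ A := Finset.disjoint_right.mp hD hv
      have hu' : u ∉ B := Finset.disjoint_left.mp hD hu
      rw [BTree.cluster, if_neg (by tauto), if_neg (by tauto), ← hcard, leaves_node']
    have hcBA : ∀ u ∈ B, ∀ v ∈ A,
        w u v * (((BTree.node L R).cluster u v).card : ℝ)
          = w u v * ((A.card : ℝ) + (B.card : ℝ)) := by
      intro u hu v hv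
      have hv' : v ∉ B := Finset.disjoint_left.mp hD hv
      have hu' : u ∉ A := Finset.disjoint_right.mp hD hu
      rw [BTree.cluster, if_neg (by tauto), if_neg (by tauto), ← hcard, leaves_node']
    have hsc : sc w (BTree.node L R)
        = sc w L + sc w R
          + ((A.card : ℝ) + (B.card : ℝ)) * cutW w A B
          + ((A.card : ℝ) + (B.card : ℝ)) * cutW w B A := by
      have eAA : (∑ u ∈ A, ∑ v ∈ A, w u v * (((BTree.node L R).cluster u v).card : ℝ))
          = sc w L :=
        Finset.sum_congr rfl fun u hu => Finset.sum_congr rfl fun v hv => hcAA u hu v hv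
      have eBB : (∑ u ∈ B, ∑ v ∈ B, w u v * (((BTree.node L R).cluster u v).card : ℝ))
          = sc w R :=
        Finset.sum_congr rfl fun u hu => Finset.sum_congr rfl fun v hv => hcBB u hu v hv
      have eAB : (∑ u ∈ A, ∑ v ∈ B, w u v * (((BTree.node L R).cluster u v).card : ℝ))
          = ((A.card : ℝ) + (B.card : ℝ)) * cutW w A B := by
        have step : (∑ u ∈ A, ∑ v ∈ B, w u v * (((BTree.node L R).cluster u v).card : ℝ))
            = ∑ u ∈ A, ∑ v ∈ B, w u v * ((A.card : ℝ) + (B.card : ℝ)) :=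
          Finset.sum_congr rfl fun u hu => Finset.sum_congr rfl fun v hv => hcAB u hu v hv
        rw [step, cutW, Finset.mul_sum]
        refine Finset.sum_congr rfl fun u _ => ?_
        rw [Finset.mul_sum]
        exact Finset.sum_congr rfl fun v _ => mul_comm _ _
      have eBA : (∑ u ∈ B, ∑ v ∈ A, w u v * (((BTree.node L R).cluster u v).card : ℝ))
          = ((A.card : ℝ) + (B.card : ℝ)) * cutW w B A := by
        have step : (∑ u ∈ B, ∑ v ∈ A, w u v * (((BTree.node L R).cluster u v).card : ℝ))
            = ∑ u ∈ B, ∑ v ∈ A, w u v * ((A.card : ℝ) + (B.card : ℝ)) :=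
          Finset.sum_congr rfl fun u hu => Finset.sum_congr rfl fun v hv => hcBA u hu v hv
        rw [step, cutW, Finset.mul_sum]
        refine Finset.sum_congr rfl fun u _ => ?_
        rw [Finset.mul_sum]
        exact Finset.sum_congr rfl fun v _ => mul_comm _ _
      rw [sc, leaves_node']
      simp only [Finset.sum_union (s₁ := L.leaves) (s₂ := R.leaves) hD, Finset.sum_add_distrib]
      rw [eAA, eBB, eAB, eBA]
      ring
    have hBA : cutW w B A = cutW w A B := cutW_comm w hw.2.1 B A
    have hcut : cutW w ((BTree.node L R).leaves) ((BTree.node L R).leaves)ᶜ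
        = cutW w A Aᶜ + cutW w B Bᶜ - 2 * cutW w A B := by
      rw [leaves_node']; exact cut_union w hw.2.1 hD
    rw [Fcut]
    rw [hsc, hcard, hcut, hBA, ← ih1, ← ih2]
    ring

lemma Kcut_le : ∀ T : BTree V, T.leavesList.Nodup → Kcut T ≤ T.leaves.card ^ 2 := by
  intro T
  induction T with
  | leaf x => intro _; simp [Kcut, BTree.leaves, BTree.leavesList]
  | node L R ihL ihR =>
    intro hnd
    simp only [BTree.leavesList, List.nodup_append] at hnd
    obtain ⟨h1, h2, hdl⟩ := hnd
    have hD : Disjoint L.leaves R.leaves := by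
      rw [BTree.leaves, BTree.leaves, List.disjoint_toFinset_iff_disjoint]
      intro a ha hb; exact hdl a ha a hb rfl
    have i1 := ihL h1
    have i2 := ihR h2
    rw [Kcut, leaves_node', Finset.card_union_of_disjoint hD]
    nlinarith [i1, i2]

lemma Fcut_approx (w w' : V → V → ℝ) (α β : ℝ) (hα : 0 ≤ α) (hβ : 0 ≤ β)
    (happrox : CutApprox w w' α β) :
    ∀ T : BTree V,
      (1 - α) * Fcut w T - β * (Kcut T : ℝ) ≤ Fcut w' T ∧
        Fcut w' T ≤ (1 + α) * Fcut w T + β * (Kcut T : ℝ) := by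
  intro T
  induction T with
  | leaf x =>
    have h := happrox {x}
    have hm : ((min ({x} : Finset V).card (Fintype.card V - ({x} : Finset V).card) : ℕ) : ℝ)
        ≤ 1 := by
      have : min ({x} : Finset V).card (Fintype.card V - ({x} : Finset V).card) ≤ 1 := by
        simp [min_le_left]
      exact_mod_cast this
    rw [Fcut, Fcut, Kcut]
    have hb1 : β * ((min ({x} : Finset V).card (Fintype.card V - ({x} : Finset V).card)
        : ℕ) : ℝ) ≤ β * 1 := mul_le_mul_of_nonneg_left hm hβ
    constructor <;> push_cast <;> linarith [h.1, h.2]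
  | node L R ihL ihR =>
    set A := L.leaves
    set B := R.leaves
    have hA := happrox A
    have hB := happrox B
    have ha0 : (0 : ℝ) ≤ (A.card : ℝ) := Nat.cast_nonneg _
    have hb0 : (0 : ℝ) ≤ (B.card : ℝ) := Nat.cast_nonneg _
    have hmA : ((min A.card (Fintype.card V - A.card) : ℕ) : ℝ) ≤ (A.card : ℝ) := by
      exact_mod_cast min_le_left A.card (Fintype.card V - A.card)
    have hmB : ((min B.card (Fintype.card V - B.card) : ℕ) : ℝ) ≤ (B.card : ℝ) := by
      exact_mod_cast min_le_left B.card (Fintype.card V - B.card)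
    have uA : (B.card : ℝ) * cutW w' A Aᶜ
        ≤ (1 + α) * ((B.card : ℝ) * cutW w A Aᶜ) + β * ((B.card : ℝ) * (A.card : ℝ)) := by
      have t1 := mul_le_mul_of_nonneg_left hA.2 hb0
      have t2 := mul_le_mul_of_nonneg_left hmA (mul_nonneg hb0 hβ)
      linarith [t1, t2]
    have lA : (1 - α) * ((B.card : ℝ) * cutW w A Aᶜ) - β * ((B.card : ℝ) * (A.card : ℝ))
        ≤ (B.card : ℝ) * cutW w' A Aᶜ := by
      have t1 := mul_le_mul_of_nonneg_left hA.1 hb0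
      have t2 := mul_le_mul_of_nonneg_left hmA (mul_nonneg hb0 hβ)
      linarith [t1, t2]
    have uB : (A.card : ℝ) * cutW w' B Bᶜ
        ≤ (1 + α) * ((A.card : ℝ) * cutW w B Bᶜ) + β * ((A.card : ℝ) * (B.card : ℝ)) := by
      have t1 := mul_le_mul_of_nonneg_left hB.2 ha0
      have t2 := mul_le_mul_of_nonneg_left hmB (mul_nonneg ha0 hβ)
      linarith [t1, t2]
    have lB : (1 - α) * ((A.card : ℝ) * cutW w B Bᶜ) - β * ((A.card : ℝ) * (B.card : ℝ))
        ≤ (A.card : ℝ) * cutW w' B Bᶜ := by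
      have t1 := mul_le_mul_of_nonneg_left hB.1 ha0
      have t2 := mul_le_mul_of_nonneg_left hmB (mul_nonneg ha0 hβ)
      linarith [t1, t2]
    rw [Fcut, Fcut, Kcut]
    push_cast
    constructor
    · linarith [ihL.1, ihR.1, lA, lB]
    · linarith [ihL.2, ihR.2, uA, uB]

lemma Fcut_eq_two_cost (w : V → V → ℝ) (hw : IsWeight w) (T : BTree V) (hT : IsHC T) :
    Fcut w T = 2 * cost w T := by
  have h := key_identity w hw T hT.1
  have hleaves : T.leaves = Finset.univ := hT.2
  have hc : cutW w T.leaves T.leavesᶜ = 0 := by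
    rw [hleaves]
    simp [cutW]
  rw [hc, mul_zero, add_zero] at h
  rw [← h, sc, hleaves, cost]
  ring

end CutApproxProof

/-- If `G'` is an `(α,β)`-approximation to cut queries in `G` (with
`α, β ≥ 0`), then for every binary tree `T` with leaf set `V`:
`(1−α)·ω_G(T) − 2βn² ≤ ω_{G'}(T) ≤ (1+α)·ω_G(T) + 2βn²`. -/
theorem cost_of_cut_approx (V : Type) [Fintype V] [DecidableEq V] (n : ℕ)
    (hcard : Fintype.card V = n) (w w' : V → V → ℝ) (hw : IsWeight w) (hw' : IsWeight w')
    (α β : ℝ) (hα : 0 ≤ α) (hβ : 0 ≤ β) (happrox : CutApprox w w' α β)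
    (T : BTree V) (hT : IsHC T) :
    (1 - α) * cost w T - 2 * β * (n : ℝ) ^ 2 ≤ cost w' T ∧
    cost w' T ≤ (1 + α) * cost w T + 2 * β * (n : ℝ) ^ 2 := by
  have h1 : Fcut w T = 2 * cost w T := Fcut_eq_two_cost w hw T hT
  have h2 : Fcut w' T = 2 * cost w' T := Fcut_eq_two_cost w' hw' T hT
  have happ := Fcut_approx w w' α β hα hβ happrox T
  have hK : (Kcut T : ℝ) ≤ (n : ℝ) ^ 2 := by
    have h := Kcut_le T hT.1
    rw [hT.2, Finset.card_univ, hcard] at h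
    exact_mod_cast h
  have hKβ : β * (Kcut T : ℝ) ≤ β * (n : ℝ) ^ 2 := mul_le_mul_of_nonneg_left hK hβ
  have hn2 : (0 : ℝ) ≤ β * (n : ℝ) ^ 2 := mul_nonneg hβ (sq_nonneg _)
  rw [h1, h2] at happ
  constructor
  · nlinarith [happ.1]
  · nlinarith [happ.2]
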